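/- Let S ⊆ [0,1]^2 be a 2-cube antichain. Then the 1-dimensional Hausdorff measure of S satisfies H^1(S) ≤ H^1(π_x(S)) + H^1(π_y(S)), where π_x and π_y are the projections onto the x-axis and y-axis respectively. In particular H^1(S) ≤ 2. -/

import Mathlib

open MeasureTheory Set Filter Topology
open scoped ENNReal

lemma stieltjes_measure_apply' (f : StieltjesFunction ℝ) (A : Set ℝ) :
    f.measure A = f.outer A := by
  rw [StieltjesFunction.measure]
  rfl

lemma stieltjes_preimage_Ioc_le (s : StieltjesFunction ℝ) (hs : Continuous s) (a b : ℝ) :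
    s.measure (s ⁻¹' (Set.Ioc a b)) ≤ ENNReal.ofReal (b - a) := by
  set V := s ⁻¹' (Set.Ioc a b) with hVdef
  rcases V.eq_empty_or_nonempty with h | hne
  · simp [h]
  have hVmem : ∀ x ∈ V, a < s x ∧ s x ≤ b := fun x hx => hx
  have hleft : ∀ x : ℝ, Function.leftLim s x = s x := fun x =>
    leftLim_eq_of_tendsto
      ((hs.tendsto x).mono_left nhdsWithin_le_nhds)
  -- bounds when bounded below
  have hm : BddBelow V → a ≤ s (sInf V) := by
    intro hbb
    have htd : Tendsto s (𝓝[>] (sInf V)) (𝓝 (s (sInf V))) :=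
      (hs.tendsto _).mono_left nhdsWithin_le_nhds
    refine ge_of_tendsto htd (Filter.Eventually.mono self_mem_nhdsWithin ?_)
    intro x (hx : x ∈ Set.Ioi (sInf V))
    obtain ⟨v, hv, hvx⟩ := exists_lt_of_csInf_lt hne (hx : sInf V < x)
    exact le_trans (hVmem v hv).1.le (s.mono hvx.le)
  have hM : BddAbove V → s (sSup V) ≤ b := by
    intro hba
    have htd : Tendsto s (𝓝[<] (sSup V)) (𝓝 (s (sSup V))) :=
      (hs.tendsto _).mono_left nhdsWithin_le_nhds
    refine le_of_tendsto htd (Filter.Eventually.mono self_mem_nhdsWithin ?_)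
    intro x (hx : x ∈ Set.Iio (sSup V))
    obtain ⟨v, hv, hvx⟩ := exists_lt_of_lt_csSup hne (hx : x < sSup V)
    exact le_trans (s.mono hvx.le) (hVmem v hv).2
  have hlow : ¬ BddBelow V → ∀ x, a ≤ s x := by
    intro hbb x
    obtain ⟨v, hv, hvx⟩ := not_bddBelow_iff.1 hbb x
    exact le_trans (hVmem v hv).1.le (s.mono hvx.le)
  have hup : ¬ BddAbove V → ∀ x, s x ≤ b := by
    intro hba x
    obtain ⟨v, hv, hvx⟩ := not_bddAbove_iff.1 hba x
    exact le_trans (s.mono hvx.le) (hVmem v hv).2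
  by_cases hbb : BddBelow V <;> by_cases hba : BddAbove V
  · have hsub : V ⊆ Set.Icc (sInf V) (sSup V) := fun x hx => ⟨csInf_le hbb hx, le_csSup hba hx⟩
    calc s.measure V ≤ s.measure (Set.Icc (sInf V) (sSup V)) := measure_mono hsub
      _ = ENNReal.ofReal (s (sSup V) - Function.leftLim s (sInf V)) := s.measure_Icc _ _
      _ ≤ ENNReal.ofReal (b - a) := by
          rw [hleft]
          exact ENNReal.ofReal_le_ofReal (by linarith [hm hbb, hM hba])
  · have hrb : BddAbove (Set.range s) := ⟨b, by rintro y ⟨x, rfl⟩; exact hup hba x⟩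
    have htend : Tendsto s atTop (𝓝 (⨆ x, s x)) := tendsto_atTop_ciSup s.mono hrb
    have hsub : V ⊆ Set.Ici (sInf V) := fun x hx => csInf_le hbb hx
    calc s.measure V ≤ s.measure (Set.Ici (sInf V)) := measure_mono hsub
      _ = ENNReal.ofReal ((⨆ x, s x) - Function.leftLim s (sInf V)) := s.measure_Ici htend _
      _ ≤ ENNReal.ofReal (b - a) := by
          rw [hleft]
          have h1 : (⨆ x, s x) ≤ b := ciSup_le (hup hba)
          exact ENNReal.ofReal_le_ofReal (by linarith [hm hbb])
  · have hrb : BddBelow (Set.range s) := ⟨a, by rintro y ⟨x, rfl⟩; exact hlow hbb x⟩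
    have htend : Tendsto s atBot (𝓝 (⨅ x, s x)) := tendsto_atBot_ciInf s.mono hrb
    have hsub : V ⊆ Set.Iic (sSup V) := fun x hx => le_csSup hba hx
    calc s.measure V ≤ s.measure (Set.Iic (sSup V)) := measure_mono hsub
      _ = ENNReal.ofReal (s (sSup V) - (⨅ x, s x)) := s.measure_Iic htend _
      _ ≤ ENNReal.ofReal (b - a) := by
          have h1 : a ≤ ⨅ x, s x := le_ciInf (hlow hbb)
          exact ENNReal.ofReal_le_ofReal (by linarith [hM hba])
  · have hrb : BddAbove (Set.range s) := ⟨b, by rintro y ⟨x, rfl⟩; exact hup hba x⟩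
    have hrb' : BddBelow (Set.range s) := ⟨a, by rintro y ⟨x, rfl⟩; exact hlow hbb x⟩
    have htop : Tendsto s atTop (𝓝 (⨆ x, s x)) := tendsto_atTop_ciSup s.mono hrb
    have hbot : Tendsto s atBot (𝓝 (⨅ x, s x)) := tendsto_atBot_ciInf s.mono hrb'
    calc s.measure V ≤ s.measure Set.univ := measure_mono (Set.subset_univ _)
      _ = ENNReal.ofReal ((⨆ x, s x) - (⨅ x, s x)) := s.measure_univ hbot htop
      _ ≤ ENNReal.ofReal (b - a) := by
          have h1 : (⨆ x, s x) ≤ b := ciSup_le (hup hba)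
          have h2 : a ≤ ⨅ x, s x := le_ciInf (hlow hbb)
          exact ENNReal.ofReal_le_ofReal (by linarith)

lemma stieltjes_measure_le_volume_image (s : StieltjesFunction ℝ) (hs : Continuous s) (A : Set ℝ) :
    s.measure A ≤ volume (s '' A) := by
  have hvol : volume (s '' A) =
      ⨅ (t : ℕ → Set ℝ) (_ : s '' A ⊆ ⋃ n, t n), ∑' n, StieltjesFunction.id.length (t n) := by
    rw [Real.volume_eq_stieltjes_id, stieltjes_measure_apply']
    exact OuterMeasure.ofFunction_apply _ _ _
  rw [hvol]
  refine le_iInf fun t => le_iInf fun ht => ?_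
  have hA : A ⊆ ⋃ n, s ⁻¹' (t n) := fun x hx => by
    rcases Set.mem_iUnion.1 (ht (Set.mem_image_of_mem s hx)) with ⟨n, hn⟩
    exact Set.mem_iUnion.2 ⟨n, hn⟩
  calc s.measure A ≤ ∑' n, s.measure (s ⁻¹' (t n)) :=
        (measure_mono hA).trans (measure_iUnion_le _)
    _ ≤ ∑' n, StieltjesFunction.id.length (t n) := by
        refine ENNReal.tsum_le_tsum fun n => ?_
        rw [StieltjesFunction.length_eq]
        refine le_iInf fun c => le_iInf fun d => le_iInf fun hcd => ?_
        calc s.measure (s ⁻¹' (t n)) ≤ s.measure (s ⁻¹' (Set.Ioc c d)) :=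
              measure_mono (Set.preimage_mono (fun x hx => hcd ⟨hx, not_isBot x⟩))
          _ ≤ ENNReal.ofReal (d - c) := stieltjes_preimage_Ioc_le s hs c d


theorem stmt_6 (S : Set (EuclideanSpace ℝ (Fin 2)))
    (hScube : ∀ x ∈ S, ∀ i, x i ∈ Set.Icc (0 : ℝ) 1)
    (hanti : ∀ x ∈ S, ∀ y ∈ S, x 0 ≤ y 0 → x 1 ≤ y 1 → x = y) :
    μH[1] S ≤ μH[1] ((fun x : EuclideanSpace ℝ (Fin 2) => x 0) '' S)
        + μH[1] ((fun x : EuclideanSpace ℝ (Fin 2) => x 1) '' S)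
      ∧ μH[1] S ≤ 2 := by
  have key : μH[1] S ≤ μH[1] ((fun x : EuclideanSpace ℝ (Fin 2) => x 0) '' S)
        + μH[1] ((fun x : EuclideanSpace ℝ (Fin 2) => x 1) '' S) := by
    rcases S.eq_empty_or_nonempty with rfl | ⟨p₀, hp₀⟩
    · simp
    set f : EuclideanSpace ℝ (Fin 2) → ℝ := fun p => p 0 - p 1 with hf
    set T : Set ℝ := f '' S with hT
    -- order facts
    have hord : ∀ p ∈ S, ∀ q ∈ S, p 0 < q 0 → q 1 < p 1 := by
      intro p hp q hq h01
      by_contra h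
      push_neg at h
      exact absurd (hanti p hp q hq h01.le h) (by intro he; rw [he] at h01; exact lt_irrefl _ h01)
    have hord' : ∀ p ∈ S, ∀ q ∈ S, p 1 < q 1 → q 0 < p 0 := by
      intro p hp q hq h01
      by_contra h
      push_neg at h
      exact absurd (hanti p hp q hq h h01.le) (by intro he; rw [he] at h01; exact lt_irrefl _ h01)
    have hmono0 : ∀ p ∈ S, ∀ q ∈ S, f p ≤ f q → p 0 ≤ q 0 := by
      intro p hp q hq hfpq
      by_contra h
      push_neg at h
      have h1 := hord q hq p hp h
      have : f q < f p := by simp only [hf]; linarith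
      linarith
    have hmono1 : ∀ p ∈ S, ∀ q ∈ S, f p ≤ f q → q 1 ≤ p 1 := by
      intro p hp q hq hfpq
      by_contra h
      push_neg at h
      have h1 := hord' p hp q hq h
      have : f q < f p := by simp only [hf]; linarith
      linarith
    have hinj : Set.InjOn f S := by
      intro p hp q hq hfe
      have h1 := hmono0 p hp q hq hfe.le
      have h2 := hmono0 q hq p hp hfe.ge
      have h3 := hmono1 p hp q hq hfe.le
      have h4 := hmono1 q hq p hp hfe.ge
      exact hanti p hp q hq h1 (le_antisymm h4 h3).le
    have sqrt_aux : ∀ a b : ℝ, 0 ≤ a → 0 ≤ b → Real.sqrt (a ^ 2 + b ^ 2) ≤ a + b := by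
      intro a b ha hb
      have h4 : a ^ 2 + b ^ 2 ≤ (a + b) ^ 2 := by nlinarith
      calc Real.sqrt (a ^ 2 + b ^ 2) ≤ Real.sqrt ((a + b) ^ 2) := Real.sqrt_le_sqrt h4
        _ = a + b := Real.sqrt_sq (by linarith)
    have hdist : ∀ p ∈ S, ∀ q ∈ S, dist p q ≤ |f p - f q| := by
      intro p hp q hq
      rcases le_total (f p) (f q) with h | h
      · have h0 := hmono0 p hp q hq h
        have h1 := hmono1 p hp q hq h
        have : dist p q ≤ (q 0 - p 0) + (p 1 - q 1) := by
          rw [EuclideanSpace.dist_eq, Fin.sum_univ_two]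
          have e0 : dist (p 0) (q 0) = q 0 - p 0 := by
            rw [Real.dist_eq, abs_sub_comm, abs_of_nonneg (by linarith)]
          have e1 : dist (p 1) (q 1) = p 1 - q 1 := by
            rw [Real.dist_eq, abs_of_nonneg (by linarith)]
          rw [e0, e1]
          exact sqrt_aux _ _ (by linarith) (by linarith)
        calc dist p q ≤ (q 0 - p 0) + (p 1 - q 1) := this
          _ = f q - f p := by simp only [hf]; ring
          _ ≤ |f p - f q| := by rw [abs_sub_comm]; exact le_abs_self _
      · have h0 := hmono0 q hq p hp h
        have h1 := hmono1 q hq p hp h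
        have : dist p q ≤ (p 0 - q 0) + (q 1 - p 1) := by
          rw [EuclideanSpace.dist_eq, Fin.sum_univ_two]
          have e0 : dist (p 0) (q 0) = p 0 - q 0 := by
            rw [Real.dist_eq, abs_of_nonneg (by linarith)]
          have e1 : dist (p 1) (q 1) = q 1 - p 1 := by
            rw [Real.dist_eq, abs_sub_comm, abs_of_nonneg (by linarith)]
          rw [e0, e1]
          exact sqrt_aux _ _ (by linarith) (by linarith)
        calc dist p q ≤ (p 0 - q 0) + (q 1 - p 1) := this
          _ = f p - f q := by simp only [hf]; ring
          _ ≤ |f p - f q| := le_abs_self _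
    -- step 1 : μH[1] S ≤ μH[1] T
    have step1 : μH[1] S ≤ μH[1] T := by
      set g : ℝ → EuclideanSpace ℝ (Fin 2) := Function.invFunOn f S with hg
      have hgS : ∀ t ∈ T, g t ∈ S ∧ f (g t) = t := by
        intro t ht
        rcases ht with ⟨p, hp, rfl⟩
        exact ⟨Function.invFunOn_mem ⟨p, hp, rfl⟩, Function.invFunOn_eq ⟨p, hp, rfl⟩⟩
      have hSsub : S ⊆ g '' T := by
        intro p hp
        have h1 : g (f p) ∈ S := (hgS _ ⟨p, hp, rfl⟩).1
        have h2 : f (g (f p)) = f p := (hgS _ ⟨p, hp, rfl⟩).2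
        exact ⟨f p, ⟨p, hp, rfl⟩, hinj h1 hp h2⟩
      have hglip : LipschitzOnWith 1 g T := by
        rw [lipschitzOnWith_iff_dist_le_mul]
        intro x hx y hy
        have h1 := hgS x hx
        have h2 := hgS y hy
        calc dist (g x) (g y) ≤ |f (g x) - f (g y)| := hdist _ h1.1 _ h2.1
          _ = |x - y| := by rw [h1.2, h2.2]
          _ = ↑(1:NNReal) * dist x y := by rw [Real.dist_eq]; simp
      calc μH[1] S ≤ μH[1] (g '' T) := measure_mono hSsub
        _ ≤ (1:NNReal) ^ (1:ℝ) * μH[1] T := hglip.hausdorffMeasure_image_le (by norm_num)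
        _ = μH[1] T := by simp
    -- Stieltjes decomposition
    have hSnonempty : ((fun p : EuclideanSpace ℝ (Fin 2) => p 0 + max (0 - f p) 0) '' S).Nonempty := ⟨_, p₀, hp₀, rfl⟩
    set φ : ℝ → ℝ := fun x => sInf ((fun p : EuclideanSpace ℝ (Fin 2) => p 0 + max (x - f p) 0) '' S) with hφ
    have hne : ∀ x : ℝ, ((fun p : EuclideanSpace ℝ (Fin 2) => p 0 + max (x - f p) 0) '' S).Nonempty :=
      fun x => ⟨_, p₀, hp₀, rfl⟩
    have hbdd : ∀ x : ℝ, BddBelow ((fun p : EuclideanSpace ℝ (Fin 2) => p 0 + max (x - f p) 0) '' S) := by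
      intro x
      refine ⟨0, ?_⟩
      rintro y ⟨p, hp, rfl⟩
      have := (hScube p hp 0).1
      positivity
    have hφle : ∀ x : ℝ, ∀ p ∈ S, φ x ≤ p 0 + max (x - f p) 0 :=
      fun x p hp => csInf_le (hbdd x) ⟨p, hp, rfl⟩
    have hleφ : ∀ x : ℝ, ∀ c : ℝ, (∀ p ∈ S, c ≤ p 0 + max (x - f p) 0) → c ≤ φ x := by
      intro x c hc
      refine le_csInf (hne x) ?_
      rintro y ⟨p, hp, rfl⟩
      exact hc p hp
    have hφmono : Monotone φ := by
      intro x y hxy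
      refine hleφ y (φ x) (fun p hp => ?_)
      refine (hφle x p hp).trans ?_
      have : max (x - f p) 0 ≤ max (y - f p) 0 := max_le_max (by linarith) le_rfl
      linarith
    have hφlip : ∀ x y : ℝ, x ≤ y → φ y ≤ φ x + (y - x) := by
      intro x y hxy
      have h1 : φ y - (y - x) ≤ φ x := by
        refine hleφ x (φ y - (y - x)) (fun p hp => ?_)
        have h2 := hφle y p hp
        have h3 : max (y - f p) 0 ≤ max (x - f p) 0 + (y - x) := by
          rcases le_total (y - f p) 0 with h | h
          · simp only [max_eq_right h]
            have := le_max_right (x - f p) 0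
            linarith
          · rw [max_eq_left h]
            rcases le_total (x - f p) 0 with h' | h'
            · rw [max_eq_right h']; linarith
            · rw [max_eq_left h']; linarith
        linarith
      linarith
    have hφlipW : LipschitzWith 1 φ := by
      refine LipschitzWith.of_dist_le_mul (fun x y => ?_)
      rw [NNReal.coe_one, one_mul, Real.dist_eq, Real.dist_eq]
      rcases le_total x y with h | h
      · rw [abs_of_nonpos (by linarith [hφmono h]), abs_of_nonpos (by linarith)]
        have := hφlip x y h
        linarith
      · rw [abs_of_nonneg (by linarith [hφmono h]), abs_of_nonneg (by linarith)]
        have := hφlip y x h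
        linarith
    have hφcont : Continuous φ := hφlipW.continuous
    have hφext : ∀ p ∈ S, φ (f p) = p 0 := by
      intro p hp
      refine le_antisymm (by simpa using hφle (f p) p hp) ?_
      refine hleφ (f p) (p 0) (fun q hq => ?_)
      rcases le_total (f q) (f p) with h | h
      · rw [max_eq_left (by linarith)]
        have h1 := hmono1 q hq p hp h
        simp only [hf] at *
        linarith
      · have h0 := hmono0 p hp q hq h
        have := le_max_right (f p - f q) 0
        linarith
    set ψ : ℝ → ℝ := fun x => x - φ x with hψ
    have hψmono : Monotone ψ := by
      intro x y hxy
      have := hφlip x y hxy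
      simp only [hψ]
      linarith
    have hψcont : Continuous ψ := continuous_id.sub hφcont
    have hψext : ∀ p ∈ S, ψ (f p) = -(p 1) := by
      intro p hp
      simp only [hψ, hφext p hp]
      simp only [hf]
      ring
    set Φ : StieltjesFunction ℝ := ⟨φ, hφmono, fun x => hφcont.continuousWithinAt⟩ with hΦ
    set Ψ : StieltjesFunction ℝ := ⟨ψ, hψmono, fun x => hψcont.continuousWithinAt⟩ with hΨ
    have hsum : Φ + Ψ = StieltjesFunction.id := by
      refine StieltjesFunction.ext (fun x => ?_)
      show φ x + ψ x = x
      simp only [hψ]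
      ring
    have hvolT : (volume : Measure ℝ) T = Φ.measure T + Ψ.measure T := by
      have h1 : (volume : Measure ℝ) = Φ.measure + Ψ.measure := by
        rw [Real.volume_eq_stieltjes_id, ← hsum, StieltjesFunction.measure_add]
      rw [h1, Measure.add_apply]
    have himg0 : φ '' T = (fun p : EuclideanSpace ℝ (Fin 2) => p 0) '' S := by
      rw [hT, ← Set.image_comp]
      exact Set.image_congr (fun p hp => hφext p hp)
    have himg1 : ψ '' T = (fun p : EuclideanSpace ℝ (Fin 2) => -(p 1)) '' S := by
      rw [hT, ← Set.image_comp]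
      exact Set.image_congr (fun p hp => hψext p hp)
    have hμΦ : Φ.measure T ≤ volume ((fun p : EuclideanSpace ℝ (Fin 2) => p 0) '' S) := by
      rw [← himg0]
      exact stieltjes_measure_le_volume_image Φ hφcont T
    have hμΨ : Ψ.measure T ≤ volume ((fun p : EuclideanSpace ℝ (Fin 2) => p 1) '' S) := by
      have hneg : (fun p : EuclideanSpace ℝ (Fin 2) => -(p 1)) '' S = -((fun p : EuclideanSpace ℝ (Fin 2) => p 1) '' S) := by
        rw [← Set.image_neg_eq_neg, ← Set.image_comp]
        rfl
      have h2 : volume ((fun p : EuclideanSpace ℝ (Fin 2) => -(p 1)) '' S) = volume ((fun p : EuclideanSpace ℝ (Fin 2) => p 1) '' S) := by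
        rw [hneg, Measure.measure_neg]
      rw [← h2, ← himg1]
      exact stieltjes_measure_le_volume_image Ψ hψcont T
    calc μH[1] S ≤ μH[1] T := step1
      _ = volume T := by rw [MeasureTheory.hausdorffMeasure_real]
      _ = Φ.measure T + Ψ.measure T := hvolT
      _ ≤ volume ((fun p : EuclideanSpace ℝ (Fin 2) => p 0) '' S) + volume ((fun p : EuclideanSpace ℝ (Fin 2) => p 1) '' S) :=
          add_le_add hμΦ hμΨ
      _ = μH[1] ((fun x : EuclideanSpace ℝ (Fin 2) => x 0) '' S) + μH[1] ((fun x : EuclideanSpace ℝ (Fin 2) => x 1) '' S) := by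
          rw [MeasureTheory.hausdorffMeasure_real]
  refine ⟨key, key.trans ?_⟩
  have hb0 : (fun x : EuclideanSpace ℝ (Fin 2) => x 0) '' S ⊆ Set.Icc (0:ℝ) 1 := by
    rintro y ⟨p, hp, rfl⟩
    exact hScube p hp 0
  have hb1 : (fun x : EuclideanSpace ℝ (Fin 2) => x 1) '' S ⊆ Set.Icc (0:ℝ) 1 := by
    rintro y ⟨p, hp, rfl⟩
    exact hScube p hp 1
  have h0 : μH[1] ((fun x : EuclideanSpace ℝ (Fin 2) => x 0) '' S) ≤ 1 := by
    rw [MeasureTheory.hausdorffMeasure_real]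
    calc volume ((fun x : EuclideanSpace ℝ (Fin 2) => x 0) '' S) ≤ volume (Set.Icc (0:ℝ) 1) :=
          measure_mono hb0
      _ = 1 := by rw [Real.volume_Icc]; norm_num
  have h1 : μH[1] ((fun x : EuclideanSpace ℝ (Fin 2) => x 1) '' S) ≤ 1 := by
    rw [MeasureTheory.hausdorffMeasure_real]
    calc volume ((fun x : EuclideanSpace ℝ (Fin 2) => x 1) '' S) ≤ volume (Set.Icc (0:ℝ) 1) :=
          measure_mono hb1
      _ = 1 := by rw [Real.volume_Icc]; norm_num
  calc μH[1] ((fun x : EuclideanSpace ℝ (Fin 2) => x 0) '' S)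
        + μH[1] ((fun x : EuclideanSpace ℝ (Fin 2) => x 1) '' S) ≤ 1 + 1 := add_le_add h0 h1
    _ = 2 := one_add_one_eq_two
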